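/- Define P : ℂ × ℂ → ℂ by P(u,v) = 3|u| v + u² \overline{v} / |u| for u ≠ 0 and P(0,v) = 0. Then for every M > 0 and all u, v, ũ, ṽ ∈ ℂ with |u| ≤ M, |v| ≤ M, |ũ| ≤ M, |ṽ| ≤ M one has |P(u,v) − P(ũ,ṽ)| ≤ 6M |u − ũ| + 4M |v − ṽ|. -/

import Mathlib

open Complex

noncomputable section

/-- `P(u,v) = 3|u|v + u²v̄/|u|` for `u ≠ 0`, `P(0,v) = 0`. -/
def Pfun (u v : ℂ) : ℂ :=
  if u = 0 then 0
  else 3 * (‖u‖ : ℂ) * v + u ^ 2 * (starRingEnd ℂ) v / (‖u‖ : ℂ)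


lemma Pfun_abs_le (u v : ℂ) : ‖Pfun u v‖ ≤ 4 * ‖u‖ * ‖v‖ := by
  unfold Pfun
  by_cases hu : u = 0
  · simp [hu]
  · simp only [if_neg hu]
    have ha : (0:ℝ) < ‖u‖ := norm_pos_iff.mpr hu
    refine le_trans (norm_add_le _ _) ?_
    rw [norm_mul, norm_mul, norm_div, norm_mul]
    simp only [Complex.norm_real, Real.norm_eq_abs, Complex.norm_conj, norm_pow]
    rw [_root_.abs_of_nonneg ha.le]
    have h3 : ‖(3:ℂ)‖ = 3 := by
      norm_num
    rw [h3]
    have heq : ‖u‖ ^ 2 * ‖v‖ / ‖u‖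
        = ‖u‖ * ‖v‖ := by
      field_simp
    rw [heq]
    nlinarith [norm_nonneg u, norm_nonneg v]


/-- Lipschitz-type estimate for `P` on balls of radius `M`. -/
theorem statement19 :
    ∀ M > (0 : ℝ), ∀ u v u' v' : ℂ,
      ‖u‖ ≤ M → ‖v‖ ≤ M →
      ‖u'‖ ≤ M → ‖v'‖ ≤ M →
      ‖Pfun u v - Pfun u' v'‖
        ≤ 6 * M * ‖u - u'‖ + 4 * M * ‖v - v'‖ := by
  intro M hM u v u' v' hu hv hu' hv'
  by_cases h1 : u = 0
  · subst h1
    have h0 : Pfun 0 v = 0 := by simp [Pfun]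
    rw [h0, zero_sub, norm_neg]
    have hP : ‖Pfun u' v'‖ ≤ 4 * M * ‖u'‖ := by
      calc ‖Pfun u' v'‖ ≤ 4 * ‖u'‖ * ‖v'‖ := Pfun_abs_le u' v'
        _ ≤ 4 * M * ‖u'‖ := by
          nlinarith [norm_nonneg u', norm_nonneg v']
    have h2 : ‖0 - u'‖ = ‖u'‖ := by simp
    rw [h2]
    nlinarith [norm_nonneg u', norm_nonneg (v - v')]
  by_cases h2 : u' = 0
  · subst h2
    have h0 : Pfun 0 v' = 0 := by simp [Pfun]
    rw [h0, sub_zero]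
    have hP : ‖Pfun u v‖ ≤ 4 * M * ‖u‖ := by
      calc ‖Pfun u v‖ ≤ 4 * ‖u‖ * ‖v‖ := Pfun_abs_le u v
        _ ≤ 4 * M * ‖u‖ := by
          nlinarith [norm_nonneg u, norm_nonneg v]
    have h3 : ‖u - 0‖ = ‖u‖ := by simp
    rw [h3]
    nlinarith [norm_nonneg u, norm_nonneg (v - v')]
  -- main case
  set a : ℝ := ‖u‖ with ha_def
  set a' : ℝ := ‖u'‖ with ha'_def
  have ha : (0:ℝ) < a := norm_pos_iff.mpr h1
  have ha' : (0:ℝ) < a' := norm_pos_iff.mpr h2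
  have haC : (a:ℂ) ≠ 0 := by exact_mod_cast ha.ne'
  have ha'C : (a':ℂ) ≠ 0 := by exact_mod_cast ha'.ne'
  have key : Pfun u v - Pfun u' v' =
      3 * (a:ℂ) * (v - v') + 3 * ((a:ℂ) - (a':ℂ)) * v'
      + u ^ 2 * ((starRingEnd ℂ) v - (starRingEnd ℂ) v') / (a:ℂ)
      + u * (u - u') / (a:ℂ) * (starRingEnd ℂ) v'
      + u * u' * ((a':ℂ) - (a:ℂ)) / ((a:ℂ) * (a':ℂ)) * (starRingEnd ℂ) v'
      + (u - u') * (u' / (a':ℂ)) * (starRingEnd ℂ) v' := by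
    simp only [Pfun, if_neg h1, if_neg h2, ← ha_def, ← ha'_def]
    field_simp
    ring
  rw [key]
  set dd := ‖u - u'‖ with hdd
  set dv := ‖v - v'‖ with hdv
  have hdd0 : 0 ≤ dd := norm_nonneg _
  have hdv0 : 0 ≤ dv := norm_nonneg _
  have h3C : ‖(3:ℂ)‖ = 3 := by
    norm_num
  have habs : |a - a'| ≤ dd := abs_norm_sub_norm_le u u'
  have b1 : ‖3 * (a:ℂ) * (v - v')‖ ≤ 3 * M * dv := by
    rw [norm_mul, norm_mul, h3C, Complex.norm_real, Real.norm_eq_abs, _root_.abs_of_nonneg ha.le]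
    nlinarith
  have b2 : ‖3 * ((a:ℂ) - (a':ℂ)) * v'‖ ≤ 3 * M * dd := by
    rw [norm_mul, norm_mul, h3C, ← Complex.ofReal_sub, Complex.norm_real, Real.norm_eq_abs]
    nlinarith [norm_nonneg v', abs_nonneg (a - a')]
  have b3 : ‖u ^ 2 * ((starRingEnd ℂ) v - (starRingEnd ℂ) v') / (a:ℂ)‖ ≤ M * dv := by
    rw [← map_sub (starRingEnd ℂ), norm_div, norm_mul, norm_pow, Complex.norm_conj,
      Complex.norm_real, Real.norm_eq_abs, _root_.abs_of_nonneg ha.le, ← ha_def, ← hdv]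
    rw [show a ^ 2 * dv / a = a * dv by field_simp]
    nlinarith
  have b4 : ‖u * (u - u') / (a:ℂ) * (starRingEnd ℂ) v'‖ ≤ M * dd := by
    rw [norm_mul, norm_div, norm_mul, Complex.norm_conj, Complex.norm_real, Real.norm_eq_abs,
      _root_.abs_of_nonneg ha.le, ← ha_def, ← hdd]
    rw [show a * dd / a = dd by field_simp]
    nlinarith [norm_nonneg v']
  have b5 : ‖u * u' * ((a':ℂ) - (a:ℂ)) / ((a:ℂ) * (a':ℂ)) * (starRingEnd ℂ) v'‖
      ≤ M * dd := by
    rw [norm_mul, norm_div, norm_mul, norm_mul, Complex.norm_conj,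
      ← Complex.ofReal_sub, Complex.norm_real, Real.norm_eq_abs, norm_mul, Complex.norm_real, Real.norm_eq_abs,
      Complex.norm_real, Real.norm_eq_abs, _root_.abs_of_nonneg ha.le, _root_.abs_of_nonneg ha'.le, ← ha_def, ← ha'_def]
    rw [show a * a' * |a' - a| / (a * a') = |a' - a| by field_simp]
    have : |a' - a| ≤ dd := by rw [abs_sub_comm]; exact habs
    nlinarith [norm_nonneg v', abs_nonneg (a' - a)]
  have b6 : ‖(u - u') * (u' / (a':ℂ)) * (starRingEnd ℂ) v'‖ ≤ M * dd := by
    rw [norm_mul, norm_mul, norm_div, Complex.norm_conj, Complex.norm_real, Real.norm_eq_abs,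
      _root_.abs_of_nonneg ha'.le, ← ha'_def, ← hdd]
    rw [show a' / a' = 1 by field_simp]
    nlinarith [norm_nonneg v']
  set t1 := 3 * (a:ℂ) * (v - v') with ht1
  set t2 := 3 * ((a:ℂ) - (a':ℂ)) * v' with ht2
  set t3 := u ^ 2 * ((starRingEnd ℂ) v - (starRingEnd ℂ) v') / (a:ℂ) with ht3
  set t4 := u * (u - u') / (a:ℂ) * (starRingEnd ℂ) v' with ht4
  set t5 := u * u' * ((a':ℂ) - (a:ℂ)) / ((a:ℂ) * (a':ℂ)) * (starRingEnd ℂ) v' with ht5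
  set t6 := (u - u') * (u' / (a':ℂ)) * (starRingEnd ℂ) v' with ht6
  have s1 := norm_add_le t1 t2
  have s2 := norm_add_le (t1 + t2) t3
  have s3 := norm_add_le (t1 + t2 + t3) t4
  have s4 := norm_add_le (t1 + t2 + t3 + t4) t5
  have s5 := norm_add_le (t1 + t2 + t3 + t4 + t5) t6
  linarith
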